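/- Let n, m ≥ 1 and consider the affine maximizer with all player weights equal to 1 and allocation constants c_A = −(max_{j ∈ [n]} Σ_{i=1}^m A_{ij})² for A ∈ Ω. Then for every type profile θ = (θ_1, …, θ_n) ∈ (ℝ^m)^n and every pair of allocations A, B ∈ Ω that both maximize c_X + Σ_{j=1}^n θ_j · X_j over X ∈ Ω, one has | Σ_{i=1}^m A_{ij} − Σ_{i=1}^m B_{ij} | ≤ ⌈m/2⌉ for every player j ∈ [n]. In particular, the cardinality sensitivity of affine maximizers for n players and m items is at most ⌈m/2⌉. -/

import Mathlib

open Finset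

def maxCard {n m : ℕ} (X : Fin m → Fin n) : ℕ :=
  Finset.univ.sup fun j : Fin n => (Finset.univ.filter fun i => X i = j).card

lemma le_maxCard {n m : ℕ} (X : Fin m → Fin n) (q : Fin n) :
    (Finset.univ.filter fun i => X i = q).card ≤ maxCard X :=
  Finset.le_sup (f := fun q : Fin n => (Finset.univ.filter fun i => X i = q).card) (mem_univ q)

lemma maxCard_le {n m : ℕ} (X : Fin m → Fin n) (c : ℕ)
    (h : ∀ q : Fin n, (Finset.univ.filter fun i => X i = q).card ≤ c) :
    maxCard X ≤ c :=
  Finset.sup_le fun q _ => h q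

lemma sum_fibers {n m : ℕ} (A : Fin m → Fin n) :
    ∑ j : Fin n, (Finset.univ.filter fun i => A i = j).card = m := by
  have h := Finset.card_eq_sum_card_fiberwise
    (f := A) (s := Finset.univ) (t := Finset.univ) (fun i _ => mem_univ (A i))
  simpa using h.symm

lemma welfare_eq {n m : ℕ} (θ : Fin n → Fin m → ℝ) (X : Fin m → Fin n) :
    ∑ j : Fin n, ∑ i : Fin m, θ j i * (if X i = j then 1 else 0) = ∑ i : Fin m, θ (X i) i := by
  rw [Finset.sum_comm]
  refine Finset.sum_congr rfl fun i _ => ?_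
  simp [mul_ite, eq_comm]

lemma g_update {n m : ℕ} (θ : Fin n → Fin m → ℝ) (A : Fin m → Fin n) (i₀ : Fin m) (p : Fin n) :
    ∑ i : Fin m, θ (Function.update A i₀ p i) i
      = (∑ i : Fin m, θ (A i) i) - θ (A i₀) i₀ + θ p i₀ := by
  have h : (fun i : Fin m => θ (Function.update A i₀ p i) i)
      = Function.update (fun i : Fin m => θ (A i) i) i₀ (θ p i₀) := by
    funext i
    by_cases hi : i = i₀ <;> simp [Function.update_apply, hi]
  rw [h, Finset.sum_update_of_mem (mem_univ i₀)]
  rw [← Finset.add_sum_erase _ _ (mem_univ i₀), Finset.sdiff_singleton_eq_erase]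
  ring

lemma one_sided {n m : ℕ} (hm : 1 ≤ m) (θ : Fin n → Fin m → ℝ) (A B : Fin m → Fin n)
    (hA : ∀ X : Fin m → Fin n,
      -((maxCard A : ℝ)) ^ 2 + ∑ i, θ (A i) i ≥ -((maxCard X : ℝ)) ^ 2 + ∑ i, θ (X i) i)
    (hB : ∀ X : Fin m → Fin n,
      -((maxCard B : ℝ)) ^ 2 + ∑ i, θ (B i) i ≥ -((maxCard X : ℝ)) ^ 2 + ∑ i, θ (X i) i)
    (j : Fin n) :
    (Finset.univ.filter fun i => A i = j).card ≤
      (Finset.univ.filter fun i => B i = j).card + (m + 1) / 2 := by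
  by_contra hcon
  push_neg at hcon
  set a := (Finset.univ.filter fun i => A i = j).card with ha
  set b := (Finset.univ.filter fun i => B i = j).card with hb
  -- basic counting facts
  have hsumA := sum_fibers A
  have hAq : ∀ q : Fin n, q ≠ j → (Finset.univ.filter fun i => A i = q).card + a ≤ m := by
    intro q hq
    have h1 : (Finset.univ.filter fun i => A i = q).card ≤
        ∑ l ∈ Finset.univ.erase j, (Finset.univ.filter fun i => A i = l).card :=
      Finset.single_le_sum (f := fun l : Fin n => (Finset.univ.filter fun i => A i = l).card)
        (fun _ _ => Nat.zero_le _) (Finset.mem_erase.mpr ⟨hq, mem_univ q⟩)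
    have h2 := Finset.add_sum_erase Finset.univ
      (fun l : Fin n => (Finset.univ.filter fun i => A i = l).card) (mem_univ j)
    rw [hsumA] at h2
    omega
  -- there is an item in A_j \ B_j
  have hex : ∃ i₀ : Fin m, A i₀ = j ∧ B i₀ ≠ j := by
    by_contra hno
    push_neg at hno
    have hsub : (Finset.univ.filter fun i => A i = j) ⊆ (Finset.univ.filter fun i => B i = j) := by
      intro i hi
      simp only [mem_filter, mem_univ, true_and] at hi ⊢
      exact hno i hi
    have := Finset.card_le_card hsub
    omega
  obtain ⟨i₀, hAi, hBi⟩ := hex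
  set X := Function.update A i₀ (B i₀) with hX
  set Y := Function.update B i₀ j with hY
  -- bundle of j in X
  have hfXj : (Finset.univ.filter fun i => X i = j)
      = (Finset.univ.filter fun i => A i = j).erase i₀ := by
    ext i
    by_cases hi : i = i₀ <;>
      simp [hX, Function.update_apply, hi, hBi]
  have hcXj : (Finset.univ.filter fun i => X i = j).card + 1 = a := by
    rw [hfXj]
    exact Finset.card_erase_add_one (by simp [hAi])
  -- other bundles of X
  have hcXq : ∀ q : Fin n, q ≠ j →
      (Finset.univ.filter fun i => X i = q).card ≤
      (Finset.univ.filter fun i => A i = q).card + 1 := by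
    intro q hq
    have hsub : (Finset.univ.filter fun i => X i = q) ⊆
        insert i₀ (Finset.univ.filter fun i => A i = q) := by
      intro i hi
      simp only [mem_filter, mem_univ, true_and] at hi
      by_cases hii : i = i₀
      · subst hii; exact Finset.mem_insert_self _ _
      · refine Finset.mem_insert_of_mem ?_
        simp only [mem_filter, mem_univ, true_and]
        rwa [hX, Function.update_apply, if_neg hii] at hi
    calc (Finset.univ.filter fun i => X i = q).card
        ≤ (insert i₀ (Finset.univ.filter fun i => A i = q)).card := Finset.card_le_card hsub
      _ ≤ (Finset.univ.filter fun i => A i = q).card + 1 := Finset.card_insert_le _ _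
  have hMXle : maxCard X + 1 ≤ a := by
    have hbound : ∀ q : Fin n, (Finset.univ.filter fun i => X i = q).card + 1 ≤ a := by
      intro q
      by_cases hq : q = j
      · subst hq; omega
      · have h1 := hcXq q hq
        have h2 := hAq q hq
        omega
    have h3 : maxCard X ≤ a - 1 := maxCard_le _ _ fun q => by have := hbound q; omega
    omega
  have hMXge : a ≤ maxCard X + 1 := by
    have := le_maxCard X j
    omega
  -- bundle of j in Y
  have hfYj : (Finset.univ.filter fun i => Y i = j)
      = insert i₀ (Finset.univ.filter fun i => B i = j) := by
    ext i
    by_cases hi : i = i₀ <;>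
      simp [hY, Function.update_apply, hi]
  have hcYj : (Finset.univ.filter fun i => Y i = j).card = b + 1 := by
    rw [hfYj, Finset.card_insert_of_notMem (by simp [hBi])]
  -- other bundles of Y
  have hcYq : ∀ q : Fin n, q ≠ j →
      (Finset.univ.filter fun i => Y i = q).card ≤
      (Finset.univ.filter fun i => B i = q).card := by
    intro q hq
    refine Finset.card_le_card fun i hi => ?_
    simp only [mem_filter, mem_univ, true_and] at hi ⊢
    by_cases hii : i = i₀
    · exfalso
      rw [hY, hii, Function.update_self] at hi
      exact hq hi.symm
    · rwa [hY, Function.update_apply, if_neg hii] at hi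
  have hMB : b ≤ maxCard B := le_maxCard B j
  have hMY : maxCard Y ≤ max (maxCard B) (b + 1) := by
    refine maxCard_le _ _ fun q => ?_
    by_cases hq : q = j
    · subst hq; rw [hcYj]; exact le_max_right _ _
    · exact le_trans (hcYq q hq) (le_trans (le_maxCard B q) (le_max_left _ _))
  have hMA : a ≤ maxCard A := le_maxCard A j
  -- welfare inequalities
  have hgX : ∑ i, θ (X i) i = (∑ i, θ (A i) i) - θ j i₀ + θ (B i₀) i₀ := by
    rw [hX, g_update, hAi]
  have hgY : ∑ i, θ (Y i) i = (∑ i, θ (B i) i) - θ (B i₀) i₀ + θ j i₀ := by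
    rw [hY, g_update]
  have h1 := hA X
  have h2 := hB Y
  rw [hgX] at h1
  rw [hgY] at h2
  have HR : (maxCard A : ℝ) ^ 2 + (maxCard B : ℝ) ^ 2
      ≤ (maxCard X : ℝ) ^ 2 + (maxCard Y : ℝ) ^ 2 := by linarith
  -- numeric contradiction
  have hk : 1 ≤ (m + 1) / 2 := by omega
  have hab : b + 2 ≤ a := by omega
  have hMXr : (maxCard X : ℝ) + 1 ≤ (maxCard A : ℝ) := by
    have h : maxCard X + 1 ≤ maxCard A := by omega
    exact_mod_cast h
  have hMXsq : ((maxCard X : ℝ) + 1) ^ 2 ≤ (maxCard A : ℝ) ^ 2 := by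
    have h0 : (0:ℝ) ≤ (maxCard X : ℝ) + 1 := by positivity
    nlinarith
  rcases le_total (b + 1) (maxCard B) with hcase | hcase
  · -- maxCard Y ≤ maxCard B
    have hYB : maxCard Y ≤ maxCard B := hMY.trans (le_of_eq (max_eq_left hcase))
    have hYBr : (maxCard Y : ℝ) ^ 2 ≤ (maxCard B : ℝ) ^ 2 := by
      have h : (maxCard Y : ℝ) ≤ (maxCard B : ℝ) := by exact_mod_cast hYB
      exact pow_le_pow_left₀ (Nat.cast_nonneg _) h 2
    have e1 : ((maxCard X : ℝ) + 1) ^ 2 = (maxCard X : ℝ) ^ 2 + 2 * (maxCard X : ℝ) + 1 := by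
      ring
    have h0 : (0:ℝ) ≤ (maxCard X : ℝ) := Nat.cast_nonneg _
    linarith
  · -- maxCard Y ≤ b + 1
    have hYb : maxCard Y ≤ b + 1 := hMY.trans (le_of_eq (max_eq_right hcase))
    have hYbr : (maxCard Y : ℝ) ≤ (b : ℝ) + 1 := by exact_mod_cast hYb
    have hXb : (b : ℝ) + 1 ≤ (maxCard X : ℝ) := by
      have h : b + 1 ≤ maxCard X := by omega
      exact_mod_cast h
    have hMBr : (b : ℝ) ≤ (maxCard B : ℝ) := by exact_mod_cast hMB
    have hYsq : (maxCard Y : ℝ) ^ 2 ≤ ((b : ℝ) + 1) ^ 2 :=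
      pow_le_pow_left₀ (Nat.cast_nonneg _) hYbr 2
    have hBsq : (b : ℝ) ^ 2 ≤ (maxCard B : ℝ) ^ 2 :=
      pow_le_pow_left₀ (Nat.cast_nonneg _) hMBr 2
    have e1 : ((maxCard X : ℝ) + 1) ^ 2 = (maxCard X : ℝ) ^ 2 + 2 * (maxCard X : ℝ) + 1 := by
      ring
    have e2 : ((b : ℝ) + 1) ^ 2 = (b : ℝ) ^ 2 + 2 * (b : ℝ) + 1 := by ring
    linarith



/-- For the affine maximizer with unit player weights and
allocation constants `c_A = −(max_j |A_j|)²`, any two tied maximizing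
allocations give each player bundles whose cardinalities differ by at most
`⌈m/2⌉`. Allocations are encoded as `A : Fin m → Fin n`. -/
theorem affine_maximizer_cardinality_sensitivity {n m : ℕ} (hn : 1 ≤ n) (hm : 1 ≤ m)
    (c : (Fin m → Fin n) → ℝ)
    (hc : ∀ A : Fin m → Fin n,
      c A = -((((Finset.univ.sup fun j : Fin n =>
        (Finset.univ.filter fun i => A i = j).card) : ℕ) : ℝ)) ^ 2) :
    ∀ (θ : Fin n → Fin m → ℝ) (A B : Fin m → Fin n),
      (∀ X : Fin m → Fin n,
        c A + ∑ j, ∑ i, θ j i * (if A i = j then 1 else 0) ≥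
        c X + ∑ j, ∑ i, θ j i * (if X i = j then 1 else 0)) →
      (∀ X : Fin m → Fin n,
        c B + ∑ j, ∑ i, θ j i * (if B i = j then 1 else 0) ≥
        c X + ∑ j, ∑ i, θ j i * (if X i = j then 1 else 0)) →
      ∀ j : Fin n,
        |((Finset.univ.filter fun i => A i = j).card : ℤ) -
          ((Finset.univ.filter fun i => B i = j).card : ℤ)| ≤ (((m + 1) / 2 : ℕ) : ℤ) := by
  intro θ A B hA hB j
  have hA' : ∀ X : Fin m → Fin n,
      -((maxCard A : ℝ)) ^ 2 + ∑ i, θ (A i) i ≥ -((maxCard X : ℝ)) ^ 2 + ∑ i, θ (X i) i := by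
    intro X
    have h := hA X
    rw [hc A, hc X, welfare_eq, welfare_eq] at h
    exact h
  have hB' : ∀ X : Fin m → Fin n,
      -((maxCard B : ℝ)) ^ 2 + ∑ i, θ (B i) i ≥ -((maxCard X : ℝ)) ^ 2 + ∑ i, θ (X i) i := by
    intro X
    have h := hB X
    rw [hc B, hc X, welfare_eq, welfare_eq] at h
    exact h
  have h1 := one_sided hm θ A B hA' hB' j
  have h2 := one_sided hm θ B A hB' hA' j
  rw [abs_sub_le_iff]
  constructor <;> [skip; skip] <;> omega
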